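/- Let u ≥ 0 be a real number with 2u < 1, and set γ₂ := 2u/(1−2u). Let α, β, c₂_prev, c₁_prev, ĉ₂_prev, ĉ₁_prev, ĉ be real numbers, and define the errors e₂_prev := ĉ₂_prev − c₂_prev and e₁_prev := ĉ₁_prev − c₁_prev. Suppose the exact recursion c = c₂_prev − α·c₁_prev − β² holds, and the computed value satisfies (1+ε)·ĉ = ĉ₂_prev·(1+δ) − α·ĉ₁_prev·(1+θ₂) − β²·(1+η) for some real numbers δ, η, ε, θ₂ with |δ| ≤ u, |η| ≤ u, |ε| ≤ u, |θ₂| ≤ γ₂. Then the error e := ĉ − c satisfies |e| ≤ |e₂_prev| + |α·e₁_prev| + u·(|ĉ₂_prev| + |β²| + |ĉ|) + γ₂·|α·ĉ₁_prev|. -/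

import Mathlib

/-- Theorem 4.3 (inductive case) of the paper: error bound for
`ĉ₂⁽ⁱ⁾ = fl[fl[ĉ₂⁽ⁱ⁻¹⁾ − fl[αᵢ ĉ₁⁽ⁱ⁻¹⁾]] − fl[βᵢ²]]`, `i ≥ 3`. -/
theorem stmt_4 (u : ℝ) (hu : 0 ≤ u) (h2u : 2 * u < 1)
    (α β c₂prev c₁prev c₂hatprev c₁hatprev chat c δ η ε θ₂ : ℝ)
    (hδ : |δ| ≤ u) (hη : |η| ≤ u) (hε : |ε| ≤ u)
    (hθ : |θ₂| ≤ 2 * u / (1 - 2 * u))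
    (hexact : c = c₂prev - α * c₁prev - β ^ 2)
    (hcomp : (1 + ε) * chat =
      c₂hatprev * (1 + δ) - α * c₁hatprev * (1 + θ₂) - β ^ 2 * (1 + η)) :
    |chat - c| ≤ |c₂hatprev - c₂prev| + |α * (c₁hatprev - c₁prev)|
      + u * (|c₂hatprev| + |β ^ 2| + |chat|)
      + (2 * u / (1 - 2 * u)) * |α * c₁hatprev| := by
  have key : chat - c = ((((c₂hatprev - c₂prev) - α * (c₁hatprev - c₁prev))
      + δ * c₂hatprev) - θ₂ * (α * c₁hatprev)) + (-(η * β ^ 2) - ε * chat) := by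
    subst hexact; linear_combination hcomp
  have h1 : |δ * c₂hatprev| ≤ u * |c₂hatprev| := by
    rw [abs_mul]; exact mul_le_mul_of_nonneg_right hδ (abs_nonneg _)
  have h2 : |θ₂ * (α * c₁hatprev)| ≤ (2 * u / (1 - 2 * u)) * |α * c₁hatprev| := by
    rw [abs_mul]; exact mul_le_mul_of_nonneg_right hθ (abs_nonneg _)
  have h3 : |η * β ^ 2| ≤ u * |β ^ 2| := by
    rw [abs_mul]; exact mul_le_mul_of_nonneg_right hη (abs_nonneg _)
  have h4 : |ε * chat| ≤ u * |chat| := by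
    rw [abs_mul]; exact mul_le_mul_of_nonneg_right hε (abs_nonneg _)
  calc |chat - c| ≤ |((((c₂hatprev - c₂prev) - α * (c₁hatprev - c₁prev))
        + δ * c₂hatprev) - θ₂ * (α * c₁hatprev))| + |(-(η * β ^ 2) - ε * chat)| := by
        rw [key]; exact abs_add_le _ _
    _ ≤ (|(((c₂hatprev - c₂prev) - α * (c₁hatprev - c₁prev)) + δ * c₂hatprev)|
        + |θ₂ * (α * c₁hatprev)|) + (|η * β ^ 2| + |ε * chat|) := by
        gcongr
        · exact abs_sub _ _
        · have := abs_sub (-(η * β ^ 2)) (ε * chat); rwa [abs_neg] at this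
    _ ≤ ((|c₂hatprev - c₂prev| + |α * (c₁hatprev - c₁prev)| + |δ * c₂hatprev|)
        + |θ₂ * (α * c₁hatprev)|) + (|η * β ^ 2| + |ε * chat|) := by
        gcongr
        calc |(((c₂hatprev - c₂prev) - α * (c₁hatprev - c₁prev)) + δ * c₂hatprev)|
            ≤ |((c₂hatprev - c₂prev) - α * (c₁hatprev - c₁prev))| + |δ * c₂hatprev| :=
              abs_add_le _ _
          _ ≤ |c₂hatprev - c₂prev| + |α * (c₁hatprev - c₁prev)| + |δ * c₂hatprev| := by
              gcongr; exact abs_sub _ _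
    _ ≤ |c₂hatprev - c₂prev| + |α * (c₁hatprev - c₁prev)|
      + u * (|c₂hatprev| + |β ^ 2| + |chat|)
      + (2 * u / (1 - 2 * u)) * |α * c₁hatprev| := by nlinarith
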